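/- Let (s_i)_{i=1}^m be a non-increasing sequence of positive reals, (a_i)_{i=1}^m positive reals, and let (λ_i*) be the unique minimizer of ∑ s_i/λ_i under the partial-sum constraints ∑_{i≤j} a_i ≤ ∑_{i≤j} λ_i (j < m) and ∑ a_i = ∑ λ_i. If λ_i* = λ_j* for some i ≠ j, then s_i = s_j. -/

import Mathlib

open Finset

/-- If `s` is non-increasing, the (unique) optimal solution of the primal problem
forces s i = s j whenever lam i = lam j with i ≠ j. -/
theorem stmt3 (m : ℕ) (hm : 0 < m) (s a : Fin m → ℝ)
    (hs : ∀ i, 0 < s i) (hsmono : Antitone s) (ha : ∀ i, 0 < a i)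
    (lam : Fin m → ℝ)
    (hfeas : (∀ i, 0 < lam i) ∧
      (∀ j : ℕ, j < m →
        ∑ i ∈ univ.filter (fun i : Fin m => (i : ℕ) < j), a i ≤
          ∑ i ∈ univ.filter (fun i : Fin m => (i : ℕ) < j), lam i) ∧
      ∑ i, a i = ∑ i, lam i)
    (hopt : ∀ mu : Fin m → ℝ,
      ((∀ i, 0 < mu i) ∧
        (∀ j : ℕ, j < m →
          ∑ i ∈ univ.filter (fun i : Fin m => (i : ℕ) < j), a i ≤
            ∑ i ∈ univ.filter (fun i : Fin m => (i : ℕ) < j), mu i) ∧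
        ∑ i, a i = ∑ i, mu i) →
      ∑ i, s i / lam i ≤ ∑ i, s i / mu i) :
    ∀ i j : Fin m, i ≠ j → lam i = lam j → s i = s j := by
  obtain ⟨hpos, hpart, htot⟩ := hfeas
  suffices key : ∀ i j : Fin m, i < j → lam i = lam j → s i = s j by
    intro i j hij hlam
    rcases lt_or_gt_of_ne hij with h | h
    · exact key i j h hlam
    · exact (key j i h hlam.symm).symm
  intro i j hij hlam
  by_contra hne
  have hsij : s j < s i := lt_of_le_of_ne (hsmono hij.le) (Ne.symm hne)
  set L := lam i with hL
  have hLpos : 0 < L := hpos i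
  have hsumpos : 0 < s i + s j := by have := hs i; have := hs j; linarith
  set ε : ℝ := L * (s i - s j) / (2 * (s i + s j)) with hε
  have hεpos : 0 < ε := by
    apply div_pos (mul_pos hLpos (by linarith)) (by linarith)
  have hkey : ε * (s i + s j) < L * (s i - s j) := by
    rw [hε]
    rw [div_mul_eq_mul_div, mul_div_assoc]
    have : (s i + s j) / (2 * (s i + s j)) = 1 / 2 := by
      field_simp
    rw [this]
    nlinarith [mul_pos hLpos (show (0:ℝ) < s i - s j by linarith)]
  have hεL : ε < L := by nlinarith [hs j, hεpos]
  set mu : Fin m → ℝ := fun k => lam k + (if k = i then ε else 0) - (if k = j then ε else 0)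
    with hmu
  have hij' : i ≠ j := hij.ne
  have hmui : mu i = L + ε := by simp [hmu, hij', hL]
  have hmuj : mu j = L - ε := by simp [hmu, hij'.symm, ← hlam]
  have hmuk : ∀ k, k ≠ i → k ≠ j → mu k = lam k := by
    intro k h1 h2; simp [hmu, h1, h2]
  have hsum_mu : ∀ S : Finset (Fin m), ∑ k ∈ S, mu k =
      ∑ k ∈ S, lam k + (if i ∈ S then ε else 0) - (if j ∈ S then ε else 0) := by
    intro S
    simp only [hmu]
    rw [Finset.sum_sub_distrib, Finset.sum_add_distrib,
      Finset.sum_ite_eq' S i (fun _ => ε), Finset.sum_ite_eq' S j (fun _ => ε)]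
  have hmupos : ∀ k, 0 < mu k := by
    intro k
    by_cases h1 : k = i
    · rw [h1, hmui]; linarith
    · by_cases h2 : k = j
      · rw [h2, hmuj]; linarith
      · rw [hmuk k h1 h2]; exact hpos k
  have hfeas' : (∀ k, 0 < mu k) ∧
      (∀ t : ℕ, t < m →
        ∑ k ∈ univ.filter (fun k : Fin m => (k : ℕ) < t), a k ≤
          ∑ k ∈ univ.filter (fun k : Fin m => (k : ℕ) < t), mu k) ∧
      ∑ k, a k = ∑ k, mu k := by
    refine ⟨hmupos, ?_, ?_⟩
    · intro t ht
      rw [hsum_mu]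
      have hmem : ∀ k : Fin m, k ∈ univ.filter (fun k : Fin m => (k : ℕ) < t) ↔ (k : ℕ) < t := by
        intro k; simp
      by_cases hjS : j ∈ univ.filter (fun k : Fin m => (k : ℕ) < t)
      · have hiS : i ∈ univ.filter (fun k : Fin m => (k : ℕ) < t) := by
          rw [hmem]; exact lt_trans (show (i:ℕ) < (j:ℕ) from hij) ((hmem j).mp hjS)
        rw [if_pos hiS, if_pos hjS]
        simpa using hpart t ht
      · rw [if_neg hjS]
        have := hpart t ht
        by_cases hiS : i ∈ univ.filter (fun k : Fin m => (k : ℕ) < t)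
        · rw [if_pos hiS]; linarith
        · rw [if_neg hiS]; linarith
    · rw [hsum_mu univ, if_pos (mem_univ i), if_pos (mem_univ j)]
      rw [htot]; ring
  have hle := hopt mu hfeas'
  -- now show the objective strictly decreased
  have hfrac : s i / (L + ε) + s j / (L - ε) < s i / L + s j / L := by
    have h1 : (0:ℝ) < L + ε := by linarith
    have h2 : (0:ℝ) < L - ε := by linarith
    rw [div_add_div _ _ h1.ne' h2.ne', div_add_div _ _ hLpos.ne' hLpos.ne',
      div_lt_div_iff₀ (by positivity) (by positivity)]
    nlinarith [mul_pos (mul_pos hLpos hεpos) (show (0:ℝ) < L * (s i - s j) - ε * (s i + s j) by linarith)]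
  have hlt : ∑ k, s k / mu k < ∑ k, s k / lam k := by
    have hsplit : ∀ g : Fin m → ℝ,
        ∑ k, g k = ∑ k ∈ (univ.erase i).erase j, g k + g i + g j := by
      intro g
      rw [show ∑ k, g k = ∑ k ∈ univ, g k from rfl,
        ← Finset.add_sum_erase univ g (mem_univ i),
        ← Finset.add_sum_erase (univ.erase i) g (Finset.mem_erase.mpr ⟨hij'.symm, mem_univ j⟩)]
      ring
    rw [hsplit (fun k => s k / mu k), hsplit (fun k => s k / lam k)]
    have hrest : ∑ k ∈ (univ.erase i).erase j, s k / mu k =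
        ∑ k ∈ (univ.erase i).erase j, s k / lam k := by
      apply Finset.sum_congr rfl
      intro k hk
      simp only [mem_erase] at hk
      rw [hmuk k hk.2.1 hk.1]
    rw [hrest, hmui, hmuj, ← hL, ← hlam]
    linarith
  linarith
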